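/- arXiv:2605.03612 — 2 statements merged into one kernel-verified Lean document; each statement's English description precedes it below -/
import Mathlib

section
/- Fix β > 0, 0 < α < 1 and c > 0, and let (G_n) be any sequence of finite simple graphs, where G_n has n vertices and maximum cut C_max(G_n) ≥ c·n². Then under the Gibbs measure P_β on {±1}^n associated to G_n, the probability of sampling a cut exceeding α·C_max(G_n) tends to 1 as n → ∞; quantitatively, P_β( C(σ) ≤ α·C_max(G_n) ) ≤ exp( n·ln 2 − β(1−α)·c·n² ), which tends to 0 as n → ∞ (and in particular is eventually at most exp(−ε n²) for every 0 < ε < β(1−α)c). -/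
open Finset Filter

/-- `spinDiff σ e = true` iff the two endpoints of the unordered pair `e` carry
opposite spins under the spin configuration `σ : {±1}ⁿ` (encoded by `Bool`). -/
def spinDiff {n : ℕ} (σ : Fin n → Bool) : Sym2 (Fin n) → Bool :=
  Sym2.lift ⟨fun i j => xor (σ i) (σ j), fun _ _ => Bool.xor_comm _ _⟩

open Classical in
/-- The cut value `C(σ)` of a spin configuration `σ ∈ {±1}ⁿ` for the graph `G`:
the number of edges of `G` whose endpoints carry opposite spins. -/
noncomputable def gCut {n : ℕ} (G : SimpleGraph (Fin n)) (σ : Fin n → Bool) : ℕ :=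
  (Finset.univ.filter
    (fun e : Sym2 (Fin n) => e ∈ G.edgeSet ∧ spinDiff σ e = true)).card

/-- The maximum cut value `C_max(G)` of the graph `G`. -/
noncomputable def maxCut {n : ℕ} (G : SimpleGraph (Fin n)) : ℕ :=
  Finset.univ.sup (fun σ : Fin n → Bool => gCut G σ)

open Classical in
/-- The Gibbs probability at inverse temperature `β` of an event `A` on spin
configurations: `P_β(A) = (∑_{σ ∈ A} e^{β C(σ)}) / (∑_σ e^{β C(σ)})`. -/
noncomputable def gibbsProb {n : ℕ} (G : SimpleGraph (Fin n)) (β : ℝ)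
    (A : (Fin n → Bool) → Prop) : ℝ :=
  (∑ σ ∈ Finset.univ.filter A, Real.exp (β * gCut G σ)) /
    (∑ σ : Fin n → Bool, Real.exp (β * gCut G σ))

set_option maxHeartbeats 1000000 in
/-- Fix `β > 0`, `0 < α < 1`, `c > 0`, and a sequence of
graphs `G n` on `n` vertices whose maximum cut satisfies `C_max(G n) ≥ c·n²`
(for all large `n`; requiring it for every `n` would be vacuous since graphs on
one vertex have no edges).  Then
`P_β(C(σ) ≤ α·C_max(G n)) ≤ exp(n·ln 2 - β(1-α)·c·n²)`, which tends to `0` as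
`n → ∞` (so the probability of sampling a cut exceeding `α·C_max(G n)` tends
to `1`), and in particular is eventually at most `exp(-ε n²)` for every
`0 < ε < β(1-α)c`. -/
theorem gibbs_beats_threshold_quadratic (β α c : ℝ) (hβ : 0 < β) (hα0 : 0 < α)
    (hα1 : α < 1) (hc : 0 < c) (G : ∀ n : ℕ, SimpleGraph (Fin n))
    (hG : ∀ᶠ n : ℕ in Filter.atTop, c * (n : ℝ) ^ 2 ≤ (maxCut (G n) : ℝ)) :
    (∀ᶠ n : ℕ in Filter.atTop,
        gibbsProb (G n) β (fun σ => (gCut (G n) σ : ℝ) ≤ α * (maxCut (G n) : ℝ)) ≤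
          Real.exp ((n : ℝ) * Real.log 2 - β * (1 - α) * c * (n : ℝ) ^ 2)) ∧
      Filter.Tendsto
        (fun n : ℕ =>
          gibbsProb (G n) β (fun σ => (gCut (G n) σ : ℝ) ≤ α * (maxCut (G n) : ℝ)))
        Filter.atTop (nhds 0) ∧
      ∀ ε : ℝ, 0 < ε → ε < β * (1 - α) * c →
        ∀ᶠ n : ℕ in Filter.atTop,
          gibbsProb (G n) β (fun σ => (gCut (G n) σ : ℝ) ≤ α * (maxCut (G n) : ℝ)) ≤
            Real.exp (-ε * (n : ℝ) ^ 2) := by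

  have h1α : 0 < 1 - α := by linarith
  set K := β * (1 - α) * c with hKdef
  have hK : 0 < K := mul_pos (mul_pos hβ h1α) hc
  have hnonneg : ∀ n : ℕ, 0 ≤ gibbsProb (G n) β
      (fun σ => (gCut (G n) σ : ℝ) ≤ α * (maxCut (G n) : ℝ)) := fun n =>
    div_nonneg (Finset.sum_nonneg fun _ _ => (Real.exp_pos _).le)
      (Finset.sum_nonneg fun _ _ => (Real.exp_pos _).le)
  have key : ∀ n : ℕ, c * (n : ℝ) ^ 2 ≤ (maxCut (G n) : ℝ) →
      gibbsProb (G n) β (fun σ => (gCut (G n) σ : ℝ) ≤ α * (maxCut (G n) : ℝ)) ≤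
        Real.exp ((n : ℝ) * Real.log 2 - K * (n : ℝ) ^ 2) := by
    intro n hM
    classical
    set M : ℝ := (maxCut (G n) : ℝ) with hMdef
    have hMnn : 0 ≤ M := Nat.cast_nonneg _
    obtain ⟨σ₀, -, hσ₀⟩ := Finset.exists_mem_eq_sup (Finset.univ : Finset (Fin n → Bool))
      Finset.univ_nonempty (fun σ => gCut (G n) σ)
    have hD : Real.exp (β * M) ≤ ∑ σ : Fin n → Bool, Real.exp (β * gCut (G n) σ) := by
      have h := Finset.single_le_sum (f := fun σ => Real.exp (β * (gCut (G n) σ : ℝ)))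
        (fun σ _ => (Real.exp_pos _).le) (Finset.mem_univ σ₀)
      have hM0 : M = (gCut (G n) σ₀ : ℝ) := by
        rw [hMdef, maxCut, hσ₀]
      rw [hM0]
      exact h
    have hDpos : 0 < ∑ σ : Fin n → Bool, Real.exp (β * gCut (G n) σ) :=
      lt_of_lt_of_le (Real.exp_pos _) hD
    rw [gibbsProb, div_le_iff₀ hDpos]
    have hstep : ∀ s : Finset (Fin n → Bool), (∀ σ ∈ s, (gCut (G n) σ : ℝ) ≤ α * M) →
        ∑ σ ∈ s, Real.exp (β * gCut (G n) σ) ≤ (2 : ℝ) ^ n * Real.exp (β * (α * M)) := by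
      intro s hs
      calc ∑ σ ∈ s, Real.exp (β * gCut (G n) σ)
          ≤ ∑ _σ ∈ s, Real.exp (β * (α * M)) := by
            apply Finset.sum_le_sum
            intro σ hσ
            exact Real.exp_le_exp.mpr (by nlinarith [hs σ hσ])
        _ = s.card * Real.exp (β * (α * M)) := by
            rw [Finset.sum_const, nsmul_eq_mul]
        _ ≤ (2 : ℝ) ^ n * Real.exp (β * (α * M)) := by
            have hcard : s.card ≤ 2 ^ n := by
              calc s.card ≤ (Finset.univ : Finset (Fin n → Bool)).card :=
                    Finset.card_le_card (Finset.subset_univ s)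
                _ = 2 ^ n := by simp [Finset.card_univ]
            have : (s.card : ℝ) ≤ (2 : ℝ) ^ n := by exact_mod_cast hcard
            exact mul_le_mul_of_nonneg_right this (Real.exp_pos _).le
    refine le_trans (hstep _ fun σ hσ => (Finset.mem_filter.mp hσ).2) ?_
    have h2 : (2 : ℝ) ^ n = Real.exp ((n : ℝ) * Real.log 2) := by
      rw [Real.exp_nat_mul, Real.exp_log two_pos]
    calc (2 : ℝ) ^ n * Real.exp (β * (α * M))
        = Real.exp ((n : ℝ) * Real.log 2 + β * (α * M)) := by
          rw [h2, ← Real.exp_add]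
      _ ≤ Real.exp ((n : ℝ) * Real.log 2 - K * (n : ℝ) ^ 2 + β * M) := by
          apply Real.exp_le_exp.mpr
          nlinarith [mul_le_mul_of_nonneg_left hM (mul_pos hβ h1α).le]
      _ = Real.exp ((n : ℝ) * Real.log 2 - K * (n : ℝ) ^ 2) * Real.exp (β * M) := by
          rw [← Real.exp_add]
      _ ≤ Real.exp ((n : ℝ) * Real.log 2 - K * (n : ℝ) ^ 2) *
            ∑ σ : Fin n → Bool, Real.exp (β * gCut (G n) σ) :=
          mul_le_mul_of_nonneg_left hD (Real.exp_pos _).le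
  have part1 : ∀ᶠ n : ℕ in Filter.atTop,
      gibbsProb (G n) β (fun σ => (gCut (G n) σ : ℝ) ≤ α * (maxCut (G n) : ℝ)) ≤
        Real.exp ((n : ℝ) * Real.log 2 - K * (n : ℝ) ^ 2) := hG.mono key
  refine ⟨part1, ?_, ?_⟩
  · have hexp : Filter.Tendsto (fun n : ℕ => Real.exp ((n : ℝ) * Real.log 2 - K * (n : ℝ) ^ 2))
        Filter.atTop (nhds 0) := by
      have h1 : Filter.Tendsto (fun n : ℕ => K * (n : ℝ)) Filter.atTop Filter.atTop :=
        Filter.Tendsto.const_mul_atTop hK tendsto_natCast_atTop_atTop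
      have h2 : Filter.Tendsto (fun n : ℕ => -(K * (n : ℝ))) Filter.atTop Filter.atBot :=
        Filter.tendsto_neg_atBot_iff.mpr h1
      have h3 : Filter.Tendsto (fun n : ℕ => Real.log 2 - K * (n : ℝ)) Filter.atTop
          Filter.atBot := by
        simpa [sub_eq_add_neg] using Filter.tendsto_atBot_add_const_left Filter.atTop
          (Real.log 2) h2
      have h4 : Filter.Tendsto (fun n : ℕ => (n : ℝ) * (Real.log 2 - K * (n : ℝ)))
          Filter.atTop Filter.atBot :=
        Filter.Tendsto.atTop_mul_atBot₀ tendsto_natCast_atTop_atTop h3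
      have h5 : Filter.Tendsto (fun n : ℕ => (n : ℝ) * Real.log 2 - K * (n : ℝ) ^ 2)
          Filter.atTop Filter.atBot := by
        refine h4.congr fun n => by ring
      exact Real.tendsto_exp_atBot.comp h5
    exact squeeze_zero' (Filter.Eventually.of_forall hnonneg) part1 hexp
  · intro ε hε hεK
    have hKε : 0 < K - ε := by linarith
    have h3 : ∀ᶠ n : ℕ in Filter.atTop, Real.log 2 ≤ (K - ε) * (n : ℝ) :=
      (Filter.Tendsto.const_mul_atTop hKε tendsto_natCast_atTop_atTop).eventually_ge_atTop _
    filter_upwards [part1, h3] with n h1 h2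
    refine h1.trans (Real.exp_le_exp.mpr ?_)
    have hn : (0 : ℝ) ≤ n := Nat.cast_nonneg n
    nlinarith [mul_le_mul_of_nonneg_left h2 hn]
end

section
/- Fix 0 < α < 1 and b > 0 with b(1−α)/8 > ln 2, and let (G_n) be a sequence of finite simple graphs, where G_n has n vertices and C_max(G_n) ≥ n²/8. If the inverse temperature scales as β_n = b/n, then under the Gibbs measure P_{β_n} on {±1}^n associated to G_n, P_{β_n}( C(σ) ≤ α·C_max(G_n) ) ≤ exp( n·( ln 2 − b(1−α)/8 ) ), which tends to 0 exponentially in n. -/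
open Finset Filter

open Classical in
lemma gibbs_key (α b : ℝ) (hα1 : α < 1) (hb : 0 < b)
    (n : ℕ) (hn : 0 < n) (G : SimpleGraph (Fin n))
    (hmc : (n : ℝ) ^ 2 / 8 ≤ (maxCut G : ℝ)) :
    gibbsProb G (b / n) (fun σ => (gCut G σ : ℝ) ≤ α * (maxCut G : ℝ)) ≤
      Real.exp ((n : ℝ) * (Real.log 2 - b * (1 - α) / 8)) := by
  have hnR : (0:ℝ) < (n:ℝ) := by exact_mod_cast hn
  set β : ℝ := b / n with hβdef
  have hβ : 0 < β := div_pos hb hnR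
  set M : ℝ := (maxCut G : ℝ) with hM
  have hM0 : 0 ≤ M := Nat.cast_nonneg _
  -- maximizer
  obtain ⟨σs, -, hσs⟩ := Finset.exists_mem_eq_sup (Finset.univ : Finset (Fin n → Bool))
    ⟨fun _ => true, Finset.mem_univ _⟩ (fun σ => gCut G σ)
  have hden : Real.exp (β * M) ≤ ∑ σ : Fin n → Bool, Real.exp (β * gCut G σ) := by
    have := Finset.single_le_sum (f := fun σ : Fin n → Bool => Real.exp (β * gCut G σ))
      (fun i _ => (Real.exp_pos _).le) (Finset.mem_univ σs)
    have hMe : M = (gCut G σs : ℝ) := by rw [hM, maxCut, hσs]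
    rw [hMe]; exact this
  have hdenpos : (0:ℝ) < ∑ σ : Fin n → Bool, Real.exp (β * gCut G σ) :=
    lt_of_lt_of_le (Real.exp_pos _) hden
  have hnum : (∑ σ ∈ Finset.univ.filter (fun σ => (gCut G σ : ℝ) ≤ α * M),
      Real.exp (β * gCut G σ)) ≤ (2:ℝ)^n * Real.exp (β * (α * M)) := by
    calc (∑ σ ∈ Finset.univ.filter (fun σ => (gCut G σ : ℝ) ≤ α * M),
        Real.exp (β * gCut G σ))
        ≤ ∑ _σ ∈ Finset.univ.filter (fun σ => (gCut G σ : ℝ) ≤ α * M),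
            Real.exp (β * (α * M)) := by
          refine Finset.sum_le_sum fun σ hσ => ?_
          have hσ' := (Finset.mem_filter.mp hσ).2
          exact Real.exp_le_exp.mpr (by nlinarith)
      _ = ((Finset.univ.filter (fun σ => (gCut G σ : ℝ) ≤ α * M)).card : ℝ) *
            Real.exp (β * (α * M)) := by rw [Finset.sum_const, nsmul_eq_mul]
      _ ≤ (2:ℝ)^n * Real.exp (β * (α * M)) := by
          refine mul_le_mul_of_nonneg_right ?_ (Real.exp_pos _).le
          have : (Finset.univ.filter (fun σ => (gCut G σ : ℝ) ≤ α * M)).card ≤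
              Fintype.card (Fin n → Bool) := Finset.card_filter_le _ _
          have hcard : Fintype.card (Fin n → Bool) = 2 ^ n := by simp
          rw [hcard] at this
          exact_mod_cast this
  have step1 : gibbsProb G β (fun σ => (gCut G σ : ℝ) ≤ α * M) ≤
      ((2:ℝ)^n * Real.exp (β * (α * M))) / Real.exp (β * M) := by
    rw [gibbsProb]
    exact div_le_div₀ (by positivity) hnum (Real.exp_pos _) hden
  have step2 : ((2:ℝ)^n * Real.exp (β * (α * M))) / Real.exp (β * M) =
      Real.exp ((n:ℝ) * Real.log 2 + β * (α * M) - β * M) := by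
    rw [Real.exp_sub, Real.exp_add,
      show (2:ℝ) = Real.exp (Real.log 2) from (Real.exp_log (by norm_num)).symm,
      ← Real.exp_nat_mul, Real.log_exp]
  have step3 : (n:ℝ) * Real.log 2 + β * (α * M) - β * M ≤
      (n:ℝ) * (Real.log 2 - b * (1 - α) / 8) := by
    have h1 : β * (1 - α) * M ≥ β * (1 - α) * ((n:ℝ)^2/8) := by
      exact mul_le_mul_of_nonneg_left hmc (mul_nonneg hβ.le (by linarith))
    have h2 : β * (1 - α) * ((n:ℝ)^2/8) = (n:ℝ) * (b * (1 - α) / 8) := by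
      rw [hβdef]; field_simp
    nlinarith
  calc gibbsProb G β (fun σ => (gCut G σ : ℝ) ≤ α * M)
      ≤ ((2:ℝ)^n * Real.exp (β * (α * M))) / Real.exp (β * M) := step1
    _ = Real.exp ((n:ℝ) * Real.log 2 + β * (α * M) - β * M) := step2
    _ ≤ Real.exp ((n:ℝ) * (Real.log 2 - b * (1 - α) / 8)) := Real.exp_le_exp.mpr step3

/-- Fix `0 < α < 1` and `b > 0` with `b(1-α)/8 > ln 2`, and a
sequence of graphs `G n` on `n` vertices with `C_max(G n) ≥ n²/8` (for all
large `n`; requiring it for every `n` would be vacuous since graphs on one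
vertex have no edges).  If the inverse temperature scales as `β_n = b/n`, then
`P_{β_n}(C(σ) ≤ α·C_max(G n)) ≤ exp(n·(ln 2 - b(1-α)/8))`, which tends to `0`
exponentially in `n`. -/
theorem gibbs_beats_threshold_scaled_temperature (α b : ℝ) (hα0 : 0 < α)
    (hα1 : α < 1) (hb : 0 < b) (hbig : Real.log 2 < b * (1 - α) / 8)
    (G : ∀ n : ℕ, SimpleGraph (Fin n))
    (hG : ∀ᶠ n : ℕ in Filter.atTop, (n : ℝ) ^ 2 / 8 ≤ (maxCut (G n) : ℝ)) :
    (∀ᶠ n : ℕ in Filter.atTop,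
        gibbsProb (G n) (b / n)
            (fun σ => (gCut (G n) σ : ℝ) ≤ α * (maxCut (G n) : ℝ)) ≤
          Real.exp ((n : ℝ) * (Real.log 2 - b * (1 - α) / 8))) ∧
      Filter.Tendsto
        (fun n : ℕ =>
          gibbsProb (G n) (b / n)
            (fun σ => (gCut (G n) σ : ℝ) ≤ α * (maxCut (G n) : ℝ)))
        Filter.atTop (nhds 0) := by
  have hc : Real.log 2 - b * (1 - α) / 8 < 0 := by linarith
  have hEv : ∀ᶠ n : ℕ in Filter.atTop,
      gibbsProb (G n) (b / n)
          (fun σ => (gCut (G n) σ : ℝ) ≤ α * (maxCut (G n) : ℝ)) ≤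
        Real.exp ((n : ℝ) * (Real.log 2 - b * (1 - α) / 8)) := by
    filter_upwards [hG, Filter.eventually_gt_atTop 0] with n hmc hn
    exact gibbs_key α b hα1 hb n hn (G n) hmc
  refine ⟨hEv, ?_⟩
  have hnonneg : ∀ n : ℕ, 0 ≤ gibbsProb (G n) (b / n)
      (fun σ => (gCut (G n) σ : ℝ) ≤ α * (maxCut (G n) : ℝ)) := by
    intro n
    rw [gibbsProb]
    apply div_nonneg
    · exact Finset.sum_nonneg fun σ _ => (Real.exp_pos _).le
    · exact Finset.sum_nonneg fun σ _ => (Real.exp_pos _).le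
  have hto : Filter.Tendsto (fun n : ℕ =>
      Real.exp ((n : ℝ) * (Real.log 2 - b * (1 - α) / 8))) Filter.atTop (nhds 0) := by
    apply Real.tendsto_exp_atBot.comp
    exact Filter.Tendsto.atTop_mul_const_of_neg hc tendsto_natCast_atTop_atTop
  exact squeeze_zero' (Filter.Eventually.of_forall hnonneg) hEv hto
end
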